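/- Let $d \ge 1$ and let $(j_n)_{n\ge1}$ be a strictly increasing sequence of positive reals with $\sum_{n\ge1} j_n^{-(d+1)} < \infty$. Define, for $r \in (0, j_1)$, $\varphi(r) = 1 - (d+1)\sum_{n\ge1} \frac{r^{d+1}}{j_n^{d+1} - r^{d+1}}$ and $u(r) = \varphi(r)^2 - 4\varphi(r) + 2$. Then $u$ is continuous and strictly increasing on $(0, j_1)$. -/
import Mathlib

private lemma aux_den (c : ℕ) (hc0 : c ≠ 0) (j : ℕ → ℝ) (hjle : ∀ n, j 0 ≤ j n)
    (n : ℕ) (r : ℝ) (hr0 : 0 ≤ r) (hr1 : r < j 0) : 0 < j n ^ c - r ^ c := by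
  have : r ^ c < j n ^ c := pow_lt_pow_left₀ (lt_of_lt_of_le hr1 (hjle n)) hr0 hc0
  linarith

private lemma aux_summ (c : ℕ) (hc0 : c ≠ 0) (j : ℕ → ℝ) (hjpos : ∀ n, 0 < j n)
    (hjle : ∀ n, j 0 ≤ j n) (hsum : Summable fun n => ((j n) ^ c)⁻¹)
    (r : ℝ) (hr0 : 0 ≤ r) (hr1 : r < j 0) :
    Summable fun n => r ^ c / (j n ^ c - r ^ c) := by
  have hj0 : 0 < j 0 := hjpos 0
  have hε : 0 < 1 - (r / j 0) ^ c := by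
    have : (r / j 0) ^ c < 1 :=
      pow_lt_one₀ (div_nonneg hr0 hj0.le) ((div_lt_one hj0).2 hr1) hc0
    linarith
  refine Summable.of_nonneg_of_le
    (fun n => div_nonneg (pow_nonneg hr0 c) (aux_den c hc0 j hjle n r hr0 hr1).le)
    ?_ (hsum.mul_left (r ^ c / (1 - (r / j 0) ^ c)))
  intro n
  have hJ : 0 < j n ^ c := pow_pos (hjpos n) c
  have hB : 0 < j 0 ^ c := pow_pos hj0 c
  have hBJ : j 0 ^ c ≤ j n ^ c := pow_le_pow_left₀ hj0.le (hjle n) c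
  have hA : 0 ≤ r ^ c := pow_nonneg hr0 c
  have hdiv : (r / j 0) ^ c = r ^ c / j 0 ^ c := div_pow r (j 0) c
  have key : (1 - (r / j 0) ^ c) * j n ^ c ≤ j n ^ c - r ^ c := by
    rw [hdiv, sub_mul, one_mul, sub_le_sub_iff_left, div_mul_eq_mul_div, le_div_iff₀ hB]
    nlinarith
  have hεJ : 0 < (1 - (r / j 0) ^ c) * j n ^ c := mul_pos hε hJ
  have h1 : r ^ c / (j n ^ c - r ^ c) ≤ r ^ c / ((1 - (r / j 0) ^ c) * j n ^ c) := by
    rw [div_le_div_iff₀ (aux_den c hc0 j hjle n r hr0 hr1) hεJ]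
    nlinarith
  have h2 : r ^ c / ((1 - (r / j 0) ^ c) * j n ^ c)
      = (r ^ c / (1 - (r / j 0) ^ c)) * ((j n) ^ c)⁻¹ := by
    field_simp
  rw [← h2]; exact h1

private lemma aux_mono (c : ℕ) (hc0 : c ≠ 0) (j : ℕ → ℝ) (hjpos : ∀ n, 0 < j n)
    (hjle : ∀ n, j 0 ≤ j n) (n : ℕ) (x y : ℝ) (hx : 0 < x) (hxy : x < y) (hy : y < j 0) :
    x ^ c / (j n ^ c - x ^ c) < y ^ c / (j n ^ c - y ^ c) := by
  have hdx := aux_den c hc0 j hjle n x hx.le (hxy.trans hy)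
  have hdy := aux_den c hc0 j hjle n y (hx.trans hxy).le hy
  have hp : x ^ c < y ^ c := pow_lt_pow_left₀ hxy hx.le hc0
  rw [div_lt_div_iff₀ hdx hdy]
  nlinarith [pow_pos hx c, pow_pos (hjpos n) c]

private lemma aux_S (c : ℕ) (hc0 : c ≠ 0) (j : ℕ → ℝ) (hjpos : ∀ n, 0 < j n)
    (hjle : ∀ n, j 0 ≤ j n) (hsum : Summable fun n => ((j n) ^ c)⁻¹) :
    (ContinuousOn (fun r : ℝ => ∑' n, r ^ c / (j n ^ c - r ^ c)) (Set.Ioo 0 (j 0))) ∧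
    (∀ x ∈ Set.Ioo (0:ℝ) (j 0), ∀ y ∈ Set.Ioo (0:ℝ) (j 0), x < y →
      (∑' n, x ^ c / (j n ^ c - x ^ c)) < ∑' n, y ^ c / (j n ^ c - y ^ c)) ∧
    (∀ r ∈ Set.Ioo (0:ℝ) (j 0), 0 < ∑' n, r ^ c / (j n ^ c - r ^ c)) := by
  have hj0 : 0 < j 0 := hjpos 0
  refine ⟨?_, ?_, ?_⟩
  · intro x hx
    obtain ⟨hx0, hx1⟩ := hx
    set b := (x + j 0) / 2 with hbdef
    have hb1 : x < b := by rw [hbdef]; linarith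
    have hb2 : b < j 0 := by rw [hbdef]; linarith
    have hb0 : 0 < b := lt_trans hx0 hb1
    have hcont : ContinuousOn (fun r : ℝ => ∑' n, r ^ c / (j n ^ c - r ^ c))
        (Set.Ioo (0:ℝ) b) := by
      refine continuousOn_tsum (u := fun n => b ^ c / (j n ^ c - b ^ c)) ?_
        (aux_summ c hc0 j hjpos hjle hsum b hb0.le hb2) ?_
      · intro n
        apply ContinuousOn.div ((continuous_pow c).continuousOn)
          ((continuous_const.sub (continuous_pow c)).continuousOn)
        intro r hr
        exact ne_of_gt (aux_den c hc0 j hjle n r hr.1.le (lt_trans hr.2 hb2))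
      · intro n r hr
        rw [Real.norm_eq_abs, abs_of_nonneg (div_nonneg (pow_nonneg hr.1.le c)
          (aux_den c hc0 j hjle n r hr.1.le (lt_trans hr.2 hb2)).le)]
        exact (aux_mono c hc0 j hjpos hjle n r b hr.1 hr.2 hb2).le
    exact (hcont.continuousAt (isOpen_Ioo.mem_nhds ⟨hx0, hb1⟩)).continuousWithinAt
  · intro x hx y hy hxy
    exact Summable.tsum_lt_tsum (i := 0)
      (fun n => (aux_mono c hc0 j hjpos hjle n x y hx.1 hxy hy.2).le)
      (aux_mono c hc0 j hjpos hjle 0 x y hx.1 hxy hy.2)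
      (aux_summ c hc0 j hjpos hjle hsum x hx.1.le hx.2)
      (aux_summ c hc0 j hjpos hjle hsum y hy.1.le hy.2)
  · intro r hr
    refine Summable.tsum_pos (aux_summ c hc0 j hjpos hjle hsum r hr.1.le hr.2)
      (fun n => div_nonneg (pow_nonneg hr.1.le c)
        (aux_den c hc0 j hjle n r hr.1.le hr.2).le) 0 ?_
    exact div_pos (pow_pos hr.1 c) (aux_den c hc0 j hjle 0 r hr.1.le hr.2)

theorem stmt_1 (d : ℕ) (hd : 1 ≤ d) (j : ℕ → ℝ) (hj : StrictMono j)
    (hjpos : ∀ n, 0 < j n) (hsum : Summable fun n => ((j n) ^ (d + 1))⁻¹)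
    (φ u : ℝ → ℝ)
    (hφ : ∀ r ∈ Set.Ioo (0 : ℝ) (j 0),
      φ r = 1 - ((d : ℝ) + 1) * ∑' n, r ^ (d + 1) / ((j n) ^ (d + 1) - r ^ (d + 1)))
    (hu : ∀ r ∈ Set.Ioo (0 : ℝ) (j 0), u r = (φ r) ^ 2 - 4 * φ r + 2) :
    ContinuousOn u (Set.Ioo (0 : ℝ) (j 0)) ∧ StrictMonoOn u (Set.Ioo (0 : ℝ) (j 0)) := by
  have hjle : ∀ n, j 0 ≤ j n := fun n => hj.monotone (Nat.zero_le n)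
  obtain ⟨hScont, hSmono, hSpos⟩ :=
    aux_S (d + 1) (Nat.succ_ne_zero d) j hjpos hjle hsum
  have hφcont : ContinuousOn φ (Set.Ioo (0:ℝ) (j 0)) := by
    apply ContinuousOn.congr (f := fun r : ℝ =>
      1 - ((d : ℝ) + 1) * ∑' n, r ^ (d + 1) / (j n ^ (d + 1) - r ^ (d + 1)))
    · exact continuousOn_const.sub (continuousOn_const.mul hScont)
    · intro r hr; exact hφ r hr
  have hdpos : (0:ℝ) < (d : ℝ) + 1 := by positivity
  have hφlt : ∀ r ∈ Set.Ioo (0:ℝ) (j 0), φ r < 1 := by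
    intro r hr
    rw [hφ r hr]
    nlinarith [hSpos r hr]
  have hφmono : ∀ x ∈ Set.Ioo (0:ℝ) (j 0), ∀ y ∈ Set.Ioo (0:ℝ) (j 0), x < y → φ y < φ x := by
    intro x hx y hy hxy
    rw [hφ x hx, hφ y hy]
    nlinarith [hSmono x hx y hy hxy]
  constructor
  · apply ContinuousOn.congr (f := fun r => (φ r) ^ 2 - 4 * φ r + 2)
    · exact ((hφcont.pow 2).sub (continuousOn_const.mul hφcont)).add continuousOn_const
    · intro r hr; exact hu r hr
  · intro x hx y hy hxy
    rw [hu x hx, hu y hy]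
    have h1 : φ y < φ x := hφmono x hx y hy hxy
    have h2 : φ x < 1 := hφlt x hx
    nlinarith [mul_pos (show (0:ℝ) < φ x - φ y by linarith)
      (show (0:ℝ) < 4 - φ x - φ y by linarith)]
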